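/- If V ∈ C²(ℝ^N; ℝ^N), then for every φ ∈ C²_c(ℝ^N) it holds ∫ φ²·|DV|₂² dx = (1/2)·∫ φ²·|curl V|₂² dx + ∫ φ²·(div V)² dx + ∫ [ 2·(Dφ², V)·div V + (D²φ², V⊗V)₂ ] dx, where all integrals are over ℝ^N. -/

import Mathlib

open MeasureTheory
open scoped RealInnerProductSpace

/-- The Jacobian matrix `DV` of a vector field `V : ℝᴺ → ℝᴺ`:
`(jac V x) i j = ∂_j V^i (x)`. -/
noncomputable def jac {N : ℕ}
    (V : EuclideanSpace ℝ (Fin N) → EuclideanSpace ℝ (Fin N))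
    (x : EuclideanSpace ℝ (Fin N)) : Matrix (Fin N) (Fin N) ℝ :=
  fun i j => fderiv ℝ V x (EuclideanSpace.single j 1) i

/-- The Hessian matrix of a scalar function `f : ℝᴺ → ℝ`:
`(hess f x) i j = ∂_j ∂_i f (x)`. -/
noncomputable def hess {N : ℕ} (f : EuclideanSpace ℝ (Fin N) → ℝ)
    (x : EuclideanSpace ℝ (Fin N)) : Matrix (Fin N) (Fin N) ℝ :=
  fun i j =>
    fderiv ℝ (fun y => fderiv ℝ f y (EuclideanSpace.single i 1)) x
      (EuclideanSpace.single j 1)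

namespace Stmt2Aux

variable {N : ℕ}

noncomputable def ee (N : ℕ) (j : Fin N) : EuclideanSpace ℝ (Fin N) := EuclideanSpace.single j 1

variable (V : EuclideanSpace ℝ (Fin N) → EuclideanSpace ℝ (Fin N))
variable (ψ : EuclideanSpace ℝ (Fin N) → ℝ)

noncomputable def J (i j : Fin N) (x : EuclideanSpace ℝ (Fin N)) : ℝ := fderiv ℝ V x (ee N j) i
noncomputable def dψ (i : Fin N) (x : EuclideanSpace ℝ (Fin N)) : ℝ := fderiv ℝ ψ x (ee N i)
noncomputable def Hψ (i j : Fin N) (x : EuclideanSpace ℝ (Fin N)) : ℝ :=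
  fderiv ℝ (dψ ψ i) x (ee N j)
noncomputable def K (a b c : Fin N) (x : EuclideanSpace ℝ (Fin N)) : ℝ :=
  fderiv ℝ (fun y => fderiv ℝ V y (ee N b)) x (ee N c) a
noncomputable def Wf (j : Fin N) (x : EuclideanSpace ℝ (Fin N)) : ℝ :=
  ψ x * (∑ i, V x i * J V j i x) - ψ x * (V x j * ∑ i, J V i i x)
    - (∑ i, dψ ψ i x * V x i) * V x j

section facts
variable {V ψ}

lemma h12 : (1 : WithTop ℕ∞) + 1 ≤ 2 := by norm_num

lemma contDiff_J (hV : ContDiff ℝ 2 V) (i j : Fin N) : ContDiff ℝ 1 (J V i j) := by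
  unfold J
  exact (EuclideanSpace.proj (𝕜 := ℝ) i).contDiff.comp
    ((hV.fderiv_right h12).clm_apply contDiff_const)

lemma contDiff_dψ (hψ : ContDiff ℝ 2 ψ) (i : Fin N) : ContDiff ℝ 1 (dψ ψ i) := by
  unfold dψ
  exact (hψ.fderiv_right h12).clm_apply contDiff_const

lemma contDiff_coord (hV : ContDiff ℝ 2 V) (i : Fin N) :
    ContDiff ℝ 2 (fun x => V x i) :=
  ContDiff.comp (EuclideanSpace.proj (𝕜 := ℝ) i).contDiff hV

lemma fderiv_coord (hV : ContDiff ℝ 2 V) (i : Fin N) (x v : EuclideanSpace ℝ (Fin N)) :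
    fderiv ℝ (fun y => V y i) x v = fderiv ℝ V x v i := by
  have h := ((EuclideanSpace.proj (𝕜 := ℝ) i).hasFDerivAt.comp x
    ((hV.differentiable (by norm_num)) x).hasFDerivAt).fderiv
  rw [show (fun y => V y i) = (⇑(EuclideanSpace.proj (𝕜 := ℝ) i)) ∘ V from rfl, h]
  rfl

lemma fderiv_J_apply (hV : ContDiff ℝ 2 V) (a b : Fin N) (x v : EuclideanSpace ℝ (Fin N)) :
    fderiv ℝ (J V a b) x v = fderiv ℝ (fun y => fderiv ℝ V y (ee N b)) x v a := by
  have hin : DifferentiableAt ℝ (fun y => fderiv ℝ V y (ee N b)) x :=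
    (((hV.fderiv_right h12).clm_apply contDiff_const).differentiable one_ne_zero) x
  have h := ((EuclideanSpace.proj (𝕜 := ℝ) a).hasFDerivAt.comp x hin.hasFDerivAt).fderiv
  rw [show J V a b = (⇑(EuclideanSpace.proj (𝕜 := ℝ) a)) ∘ (fun y => fderiv ℝ V y (ee N b))
    from rfl, h]
  rfl

lemma K_symm (hV : ContDiff ℝ 2 V) (a b c : Fin N) (x : EuclideanSpace ℝ (Fin N)) :
    K V a b c x = K V a c b x := by
  have hd : ∀ y, DifferentiableAt ℝ (fun z => fderiv ℝ V z) y :=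
    fun y => ((hV.fderiv_right h12).differentiable one_ne_zero) y
  have key : ∀ u w : EuclideanSpace ℝ (Fin N),
      fderiv ℝ (fun y => fderiv ℝ V y u) x w = fderiv ℝ (fderiv ℝ V) x w u := by
    intro u w
    rw [fderiv_clm_apply (hd x) (differentiableAt_const u)]
    simp
  have hsymm := ((hV.contDiffAt (x := x)).isSymmSndFDerivAt (by simp)).eq (ee N c) (ee N b)
  unfold K
  rw [key, key, hsymm]
end facts

section helpers
variable {N : ℕ} {x v : EuclideanSpace ℝ (Fin N)}

lemma fderiv_mul_apply' {f g : EuclideanSpace ℝ (Fin N) → ℝ}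
    (hf : DifferentiableAt ℝ f x) (hg : DifferentiableAt ℝ g x) :
    fderiv ℝ (fun y => f y * g y) x v = fderiv ℝ f x v * g x + f x * fderiv ℝ g x v := by
  rw [fderiv_fun_mul hf hg]
  simp only [ContinuousLinearMap.add_apply, ContinuousLinearMap.smul_apply, smul_eq_mul]
  ring

lemma fderiv_sum_apply' {ι : Type*} {s : Finset ι} {f : ι → EuclideanSpace ℝ (Fin N) → ℝ}
    (hf : ∀ i ∈ s, DifferentiableAt ℝ (f i) x) :
    fderiv ℝ (fun y => ∑ i ∈ s, f i y) x v = ∑ i ∈ s, fderiv ℝ (f i) x v := by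
  rw [fderiv_fun_sum hf]
  simp

lemma fderiv_sub_apply' {f g : EuclideanSpace ℝ (Fin N) → ℝ}
    (hf : DifferentiableAt ℝ f x) (hg : DifferentiableAt ℝ g x) :
    fderiv ℝ (fun y => f y - g y) x v = fderiv ℝ f x v - fderiv ℝ g x v := by
  rw [fderiv_fun_sub hf hg]; simp

end helpers
section expand
variable {N : ℕ}
variable {V : EuclideanSpace ℝ (Fin N) → EuclideanSpace ℝ (Fin N)}
variable {ψ : EuclideanSpace ℝ (Fin N) → ℝ}

lemma expandW (hV : ContDiff ℝ 2 V) (hψ : ContDiff ℝ 2 ψ) (j : Fin N)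
    (x : EuclideanSpace ℝ (Fin N)) :
    fderiv ℝ (Wf V ψ j) x (ee N j)
      = (dψ ψ j x * (∑ i, V x i * J V j i x)
          + ψ x * (∑ i, (J V i j x * J V j i x + V x i * K V j i j x)))
        - (dψ ψ j x * (V x j * ∑ i, J V i i x)
          + ψ x * (J V j j x * (∑ i, J V i i x) + V x j * (∑ i, K V i i j x)))
        - ((∑ i, (Hψ ψ i j x * V x i + dψ ψ i x * J V i j x)) * V x j
          + (∑ i, dψ ψ i x * V x i) * J V j j x) := by
  have hdVc : ∀ i, DifferentiableAt ℝ (fun y => V y i) x :=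
    fun i => ((contDiff_coord hV i).differentiable (by norm_num)) x
  have hdJ : ∀ a b, DifferentiableAt ℝ (J V a b) x :=
    fun a b => ((contDiff_J hV a b).differentiable one_ne_zero) x
  have hdψx : DifferentiableAt ℝ ψ x := (hψ.differentiable (by norm_num)) x
  have hddψ : ∀ i, DifferentiableAt ℝ (dψ ψ i) x :=
    fun i => ((contDiff_dψ hψ i).differentiable one_ne_zero) x
  have hS : DifferentiableAt ℝ (fun y => ∑ i, V y i * J V j i y) x :=
    DifferentiableAt.fun_sum fun i _ => (hdVc i).mul (hdJ j i)
  have hT : DifferentiableAt ℝ (fun y => ∑ i, J V i i y) x :=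
    DifferentiableAt.fun_sum fun i _ => hdJ i i
  have hG : DifferentiableAt ℝ (fun y => ∑ i, dψ ψ i y * V y i) x :=
    DifferentiableAt.fun_sum fun i _ => (hddψ i).mul (hdVc i)
  have hsum1 : fderiv ℝ (fun y => ∑ i, V y i * J V j i y) x (ee N j)
      = ∑ i, (J V i j x * J V j i x + V x i * K V j i j x) := by
    rw [fderiv_sum_apply' (fun i _ => (hdVc i).fun_mul (hdJ j i))]
    refine Finset.sum_congr rfl fun i _ => ?_
    rw [fderiv_mul_apply' (hdVc i) (hdJ j i), fderiv_coord hV, fderiv_J_apply hV]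
    rfl
  have hsum2 : fderiv ℝ (fun y => ∑ i, J V i i y) x (ee N j) = ∑ i, K V i i j x := by
    rw [fderiv_sum_apply' (fun i _ => hdJ i i)]
    exact Finset.sum_congr rfl fun i _ => by rw [fderiv_J_apply hV]; rfl
  have hsum3 : fderiv ℝ (fun y => ∑ i, dψ ψ i y * V y i) x (ee N j)
      = ∑ i, (Hψ ψ i j x * V x i + dψ ψ i x * J V i j x) := by
    rw [fderiv_sum_apply' (fun i _ => (hddψ i).fun_mul (hdVc i))]
    refine Finset.sum_congr rfl fun i _ => ?_
    rw [fderiv_mul_apply' (hddψ i) (hdVc i), fderiv_coord hV]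
    rfl
  show fderiv ℝ (fun y => ψ y * (∑ i, V y i * J V j i y)
      - ψ y * (V y j * ∑ i, J V i i y) - (∑ i, dψ ψ i y * V y i) * V y j) x (ee N j) = _
  rw [fderiv_sub_apply' ((hdψx.fun_mul hS).fun_sub (hdψx.fun_mul ((hdVc j).fun_mul hT))) (hG.fun_mul (hdVc j)),
    fderiv_sub_apply' (hdψx.fun_mul hS) (hdψx.fun_mul ((hdVc j).fun_mul hT)),
    fderiv_mul_apply' hdψx hS, fderiv_mul_apply' hdψx ((hdVc j).fun_mul hT),
    fderiv_mul_apply' hG (hdVc j), fderiv_mul_apply' (hdVc j) hT,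
    hsum1, hsum2, hsum3, fderiv_coord hV]
  rfl
end expand
section divw
variable {N : ℕ}
variable {V : EuclideanSpace ℝ (Fin N) → EuclideanSpace ℝ (Fin N)}
variable {ψ : EuclideanSpace ℝ (Fin N) → ℝ}

lemma divW (hV : ContDiff ℝ 2 V) (hψ : ContDiff ℝ 2 ψ) (x : EuclideanSpace ℝ (Fin N)) :
    ∑ j, fderiv ℝ (Wf V ψ j) x (ee N j)
      = ψ x * (∑ i, ∑ j, J V i j x * J V j i x)
        - ψ x * (∑ i, J V i i x) ^ 2
        - 2 * (∑ i, dψ ψ i x * V x i) * (∑ i, J V i i x)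
        - ∑ i, ∑ j, Hψ ψ i j x * V x i * V x j := by
  rw [Finset.sum_congr rfl fun j _ => expandW hV hψ j x]
  -- expand all per-j terms into sums over i
  have reorg : ∀ j, ((dψ ψ j x * (∑ i, V x i * J V j i x)
          + ψ x * (∑ i, (J V i j x * J V j i x + V x i * K V j i j x)))
        - (dψ ψ j x * (V x j * ∑ i, J V i i x)
          + ψ x * (J V j j x * (∑ i, J V i i x) + V x j * (∑ i, K V i i j x)))
        - ((∑ i, (Hψ ψ i j x * V x i + dψ ψ i x * J V i j x)) * V x j
          + (∑ i, dψ ψ i x * V x i) * J V j j x))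
      = ((∑ i, dψ ψ j x * (V x i * J V j i x))
        + (∑ i, ψ x * (J V i j x * J V j i x))
        + (∑ i, ψ x * (V x i * K V j i j x)))
        - ((∑ i, dψ ψ j x * (V x j * J V i i x))
        + (∑ i, ψ x * (J V j j x * J V i i x))
        + (∑ i, ψ x * (V x j * K V i i j x)))
        - ((∑ i, Hψ ψ i j x * V x i * V x j)
        + (∑ i, dψ ψ i x * J V i j x * V x j)
        + (∑ i, dψ ψ i x * V x i * J V j j x)) := by
    intro j
    simp only [Finset.mul_sum, Finset.sum_mul, Finset.sum_add_distrib, mul_add, add_mul]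
    ring_nf
  rw [Finset.sum_congr rfl fun j _ => reorg j]
  simp only [Finset.sum_sub_distrib, Finset.sum_add_distrib]
  -- identification of blocks
  have e18 : (∑ j, ∑ i, dψ ψ j x * (V x i * J V j i x))
      = ∑ j, ∑ i, dψ ψ i x * J V i j x * V x j := by
    rw [Finset.sum_comm]
    exact Finset.sum_congr rfl fun i _ => Finset.sum_congr rfl fun j _ => by ring
  have e36 : (∑ j, ∑ i, ψ x * (V x i * K V j i j x))
      = ∑ j, ∑ i, ψ x * (V x j * K V i i j x) := by
    rw [Finset.sum_comm]
    refine Finset.sum_congr rfl fun a _ => Finset.sum_congr rfl fun b _ => ?_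
    rw [K_symm hV b a b x]
  have hB2 : ψ x * (∑ i, ∑ j, J V i j x * J V j i x)
      = ∑ j, ∑ i, ψ x * (J V i j x * J V j i x) := by
    rw [Finset.sum_comm]
    simp only [Finset.mul_sum]
  have hB5 : ψ x * (∑ i, J V i i x) ^ 2 = ∑ j, ∑ i, ψ x * (J V j j x * J V i i x) := by
    rw [sq, Finset.sum_mul_sum]
    simp only [Finset.mul_sum]
  have hB49 : 2 * (∑ i, dψ ψ i x * V x i) * (∑ i, J V i i x)
      = (∑ j, ∑ i, dψ ψ j x * (V x j * J V i i x))
        + ∑ j, ∑ i, dψ ψ i x * V x i * J V j j x := by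
    have h1 : (∑ i, dψ ψ i x * V x i) * (∑ i, J V i i x)
        = ∑ j, ∑ i, dψ ψ j x * (V x j * J V i i x) := by
      rw [Finset.sum_mul_sum]
      exact Finset.sum_congr rfl fun a _ => Finset.sum_congr rfl fun b _ => by ring
    have h2 : (∑ i, dψ ψ i x * V x i) * (∑ i, J V i i x)
        = ∑ j, ∑ i, dψ ψ i x * V x i * J V j j x := by
      rw [Finset.sum_mul_sum, Finset.sum_comm]
    rw [two_mul, add_mul]
    nth_rewrite 1 [h1]
    rw [h2]
  have hB7 : (∑ i, ∑ j, Hψ ψ i j x * V x i * V x j)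
      = ∑ j, ∑ i, Hψ ψ i j x * V x i * V x j := by rw [Finset.sum_comm]
  rw [hB2, hB5, hB49, hB7, e18, e36]
  ring
end divw
section support
variable {N : ℕ}
variable {V : EuclideanSpace ℝ (Fin N) → EuclideanSpace ℝ (Fin N)}
variable {ψ : EuclideanSpace ℝ (Fin N) → ℝ}

lemma dψ_zero (i : Fin N) {x : EuclideanSpace ℝ (Fin N)} (hx : x ∉ tsupport ψ) :
    dψ ψ i x = 0 := by
  have h : fderiv ℝ ψ x = 0 := by
    by_contra h
    exact hx (support_fderiv_subset ℝ (Function.mem_support.mpr h))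
  unfold dψ
  rw [h]
  rfl

lemma Hψ_zero (i j : Fin N) {x : EuclideanSpace ℝ (Fin N)} (hx : x ∉ tsupport ψ) :
    Hψ ψ i j x = 0 := by
  have hsub : tsupport (dψ ψ i) ⊆ tsupport ψ := by
    apply closure_minimal _ (isClosed_closure)
    intro y hy
    by_contra hy'
    exact (Function.mem_support.mp hy) (dψ_zero i hy')
  have h : fderiv ℝ (dψ ψ i) x = 0 := by
    by_contra h
    exact hx (hsub (tsupport_fderiv_subset ℝ (subset_tsupport _ (Function.mem_support.mpr h))))
  unfold Hψ
  rw [h]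
  rfl

lemma Wf_zero (j : Fin N) {x : EuclideanSpace ℝ (Fin N)} (hx : x ∉ tsupport ψ) :
    Wf V ψ j x = 0 := by
  have h0 : ψ x = 0 := image_eq_zero_of_notMem_tsupport hx
  have h1 : ∀ i, dψ ψ i x = 0 := fun i => dψ_zero i hx
  simp [Wf, h0, h1]

lemma contDiff_Wf (hV : ContDiff ℝ 2 V) (hψ : ContDiff ℝ 2 ψ) (j : Fin N) :
    ContDiff ℝ 1 (Wf V ψ j) := by
  have hψ1 : ContDiff ℝ 1 ψ := hψ.of_le (by norm_num)
  have hc : ∀ i, ContDiff ℝ 1 fun x => V x i :=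
    fun i => (contDiff_coord hV i).of_le (by norm_num)
  exact ((hψ1.mul (ContDiff.sum fun i _ => (hc i).mul (contDiff_J hV j i))).sub
    (hψ1.mul ((hc j).mul (ContDiff.sum fun i _ => contDiff_J hV i i)))).sub
    ((ContDiff.sum fun i _ => (contDiff_dψ hψ i).mul (hc i)).mul (hc j))

lemma hasCompactSupport_Wf (hψs : HasCompactSupport ψ) (j : Fin N) :
    HasCompactSupport (Wf V ψ j) :=
  HasCompactSupport.intro hψs fun _ hx => Wf_zero j hx

-- integral of a directional derivative of a compactly supported C¹ function vanishes
lemma integral_dderiv_eq_zero (g : EuclideanSpace ℝ (Fin N) → ℝ) (hg : ContDiff ℝ 1 g)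
    (hgs : HasCompactSupport g) (v : EuclideanSpace ℝ (Fin N)) :
    ∫ x, fderiv ℝ g x v = 0 := by
  have hgi : MeasureTheory.Integrable g := hg.continuous.integrable_of_hasCompactSupport hgs
  have hg'c : Continuous fun x => fderiv ℝ g x v :=
    (hg.continuous_fderiv one_ne_zero).clm_apply continuous_const
  have hg's : HasCompactSupport fun x => fderiv ℝ g x v :=
    (hgs.fderiv ℝ).comp_left (g := fun L : EuclideanSpace ℝ (Fin N) →L[ℝ] ℝ => L v) rfl
  have hg'i : MeasureTheory.Integrable fun x => fderiv ℝ g x v :=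
    hg'c.integrable_of_hasCompactSupport hg's
  have h := integral_mul_fderiv_eq_neg_fderiv_mul_of_integrable (μ := volume)
    (f := g) (g := fun _ => (1:ℝ)) (v := v)
    (by simpa using hg'i) (by simp) (by simpa using hgi)
    (fun x _ => (hg.differentiable one_ne_zero) x) (fun x _ => (differentiable_const _) x)
  simpa using h

end support
section ibp
variable {N : ℕ}
variable {V : EuclideanSpace ℝ (Fin N) → EuclideanSpace ℝ (Fin N)}
variable {ψ : EuclideanSpace ℝ (Fin N) → ℝ}

lemma cont_J (hV : ContDiff ℝ 2 V) (i j : Fin N) : Continuous (J V i j) :=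
  (contDiff_J hV i j).continuous

lemma cont_Hψ (hψ : ContDiff ℝ 2 ψ) (i j : Fin N) : Continuous (Hψ ψ i j) := by
  unfold Hψ
  exact ((contDiff_dψ hψ i).continuous_fderiv one_ne_zero).clm_apply continuous_const

lemma ibp (hV : ContDiff ℝ 2 V) (hψ : ContDiff ℝ 2 ψ) (hψs : HasCompactSupport ψ) :
    ∫ x, ψ x * ∑ i, ∑ j, J V i j x * J V j i x
      = (∫ x, ψ x * (∑ i, J V i i x) ^ 2)
        + ∫ x, (2 * (∑ i, dψ ψ i x * V x i) * (∑ i, J V i i x)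
            + ∑ i, ∑ j, Hψ ψ i j x * V x i * V x j) := by
  have hVcont : ∀ i, Continuous fun x => V x i := fun i => (contDiff_coord hV i).continuous
  have hdψcont : ∀ i, Continuous (dψ ψ i) := fun i => (contDiff_dψ hψ i).continuous
  -- integrability
  have iA : Integrable fun x => ψ x * ∑ i, ∑ j, J V i j x * J V j i x := by
    apply Continuous.integrable_of_hasCompactSupport
    · exact hψ.continuous.mul (continuous_finset_sum _ fun i _ =>
        continuous_finset_sum _ fun j _ => (cont_J hV i j).mul (cont_J hV j i))
    · exact HasCompactSupport.intro hψs fun x hx => by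
        rw [image_eq_zero_of_notMem_tsupport hx, zero_mul]
  have iB : Integrable fun x => ψ x * (∑ i, J V i i x) ^ 2 := by
    apply Continuous.integrable_of_hasCompactSupport
    · exact hψ.continuous.mul ((continuous_finset_sum _ fun i _ => cont_J hV i i).pow 2)
    · exact HasCompactSupport.intro hψs fun x hx => by
        rw [image_eq_zero_of_notMem_tsupport hx, zero_mul]
  have iC : Integrable fun x => 2 * (∑ i, dψ ψ i x * V x i) * (∑ i, J V i i x)
      + ∑ i, ∑ j, Hψ ψ i j x * V x i * V x j := by
    apply Continuous.integrable_of_hasCompactSupport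
    · exact ((continuous_const.mul (continuous_finset_sum _ fun i _ =>
        (hdψcont i).mul (hVcont i))).mul
          (continuous_finset_sum _ fun i _ => cont_J hV i i)).add
        (continuous_finset_sum _ fun i _ => continuous_finset_sum _ fun j _ =>
          ((cont_Hψ hψ i j).mul (hVcont i)).mul (hVcont j))
    · refine HasCompactSupport.intro hψs fun x hx => ?_
      have h1 : ∀ i, dψ ψ i x = 0 := fun i => dψ_zero i hx
      have h2 : ∀ i j, Hψ ψ i j x = 0 := fun i j => Hψ_zero i j hx
      simp [h1, h2]
  have iW : ∀ j, Integrable fun x => fderiv ℝ (Wf V ψ j) x (ee N j) := by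
    intro j
    apply Continuous.integrable_of_hasCompactSupport
    · exact ((contDiff_Wf hV hψ j).continuous_fderiv one_ne_zero).clm_apply continuous_const
    · exact ((hasCompactSupport_Wf hψs j).fderiv ℝ).comp_left
        (g := fun L : EuclideanSpace ℝ (Fin N) →L[ℝ] ℝ => L (ee N j)) rfl
  -- integral of the divergence vanishes
  have hzero : ∫ x, ∑ j, fderiv ℝ (Wf V ψ j) x (ee N j) = 0 := by
    rw [integral_finset_sum _ fun j _ => iW j]
    refine Finset.sum_eq_zero fun j _ => ?_
    exact integral_dderiv_eq_zero (Wf V ψ j) (contDiff_Wf hV hψ j)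
      (hasCompactSupport_Wf hψs j) (ee N j)
  have heq : (fun x => ∑ j, fderiv ℝ (Wf V ψ j) x (ee N j))
      = fun x => (ψ x * ∑ i, ∑ j, J V i j x * J V j i x)
        - (ψ x * (∑ i, J V i i x) ^ 2
          + (2 * (∑ i, dψ ψ i x * V x i) * (∑ i, J V i i x)
            + ∑ i, ∑ j, Hψ ψ i j x * V x i * V x j)) := by
    funext x
    rw [divW hV hψ x]
    ring
  have iBC : Integrable fun x => ψ x * (∑ i, J V i i x) ^ 2
      + (2 * (∑ i, dψ ψ i x * V x i) * (∑ i, J V i i x)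
        + ∑ i, ∑ j, Hψ ψ i j x * V x i * V x j) := iB.add iC
  rw [heq, integral_sub iA iBC, sub_eq_zero] at hzero
  rw [hzero, integral_add iB iC]

end ibp

lemma clm_decomp {N : ℕ} (L : EuclideanSpace ℝ (Fin N) →L[ℝ] ℝ) (v : EuclideanSpace ℝ (Fin N)) :
    L v = ∑ i, v i * L (EuclideanSpace.single i 1) := by
  have hv : v = ∑ i, v i • (EuclideanSpace.single i 1 : EuclideanSpace ℝ (Fin N)) := by
    ext j
    have h : (∑ i, v i • (EuclideanSpace.single i 1 : EuclideanSpace ℝ (Fin N))) j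
        = ∑ i, (v i • (EuclideanSpace.single i 1 : EuclideanSpace ℝ (Fin N))) j :=
      by rw [WithLp.ofLp_sum, Finset.sum_apply]
    rw [h]
    simp [EuclideanSpace.single_apply]
  conv_lhs => rw [hv]
  simp [mul_comm]

end Stmt2Aux

open Stmt2Aux

/-- For `V ∈ C²(ℝᴺ; ℝᴺ)` and `φ ∈ C²_c(ℝᴺ)`:
`∫ φ²|DV|₂² = (1/2)∫ φ²|curl V|₂² + ∫ φ²(div V)² + ∫ [2 (Dφ², V) div V + (D²φ², V⊗V)₂]`. -/
theorem stmt2 {N : ℕ}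
    (V : EuclideanSpace ℝ (Fin N) → EuclideanSpace ℝ (Fin N))
    (φ : EuclideanSpace ℝ (Fin N) → ℝ)
    (hV : ContDiff ℝ 2 V) (hφ : ContDiff ℝ 2 φ) (hsupp : HasCompactSupport φ) :
    ∫ x, (φ x) ^ 2 * ∑ i, ∑ j, (jac V x i j) ^ 2 =
      (1 / 2) * (∫ x, (φ x) ^ 2 * ∑ i, ∑ j, (jac V x i j - jac V x j i) ^ 2)
      + (∫ x, (φ x) ^ 2 * (∑ i, jac V x i i) ^ 2)
      + ∫ x, (2 * ⟪gradient (fun y => (φ y) ^ 2) x, V x⟫ * (∑ i, jac V x i i)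
          + ∑ i, ∑ j, hess (fun y => (φ y) ^ 2) x i j * (V x i) * (V x j)) := by
  have hψ : ContDiff ℝ 2 (fun y => φ y ^ 2) := hφ.pow 2
  have hψs : HasCompactSupport (fun y => φ y ^ 2) :=
    HasCompactSupport.intro hsupp fun x hx => by
      rw [image_eq_zero_of_notMem_tsupport hx]; norm_num
  have hjac : ∀ (x : EuclideanSpace ℝ (Fin N)) (i j : Fin N),
      jac V x i j = J V i j x := fun _ _ _ => rfl
  have hhess : ∀ (x : EuclideanSpace ℝ (Fin N)) (i j : Fin N),
      hess (fun y => φ y ^ 2) x i j = Hψ (fun y => φ y ^ 2) i j x := fun _ _ _ => rfl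
  have hgrad : ∀ x, ⟪gradient (fun y => φ y ^ 2) x, V x⟫
      = ∑ i, dψ (fun y => φ y ^ 2) i x * V x i := by
    intro x
    rw [gradient, InnerProductSpace.toDual_symm_apply,
      clm_decomp (fderiv ℝ (fun y => φ y ^ 2) x) (V x)]
    exact Finset.sum_congr rfl fun i _ => by rw [mul_comm]; rfl
  simp only [hjac, hhess, hgrad]
  -- pointwise algebraic identity (Step A)
  have pt : ∀ x, φ x ^ 2 * ∑ i, ∑ j, (J V i j x) ^ 2
      = 1/2 * (φ x ^ 2 * ∑ i, ∑ j, (J V i j x - J V j i x) ^ 2)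
        + φ x ^ 2 * ∑ i, ∑ j, J V i j x * J V j i x := by
    intro x
    have hswap : ∑ i, ∑ j, (J V j i x) ^ 2 = ∑ i, ∑ j, (J V i j x) ^ 2 := by
      rw [Finset.sum_comm]
    have hexp : ∑ i, ∑ j, (J V i j x - J V j i x) ^ 2
        = (∑ i, ∑ j, (J V i j x) ^ 2) + (∑ i, ∑ j, (J V j i x) ^ 2)
          - 2 * ∑ i, ∑ j, J V i j x * J V j i x := by
      have h1 : ∀ (i j : Fin N), (J V i j x - J V j i x) ^ 2
          = ((J V i j x)^2 + (J V j i x)^2) - 2 * (J V i j x * J V j i x) :=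
        fun i j => by ring
      simp only [h1, Finset.sum_sub_distrib, Finset.sum_add_distrib, ← Finset.mul_sum]
    rw [hexp, hswap]
    ring
  simp only [pt]
  -- integrability for splitting the first integral
  have iC2 : MeasureTheory.Integrable
      fun x => φ x ^ 2 * ∑ i, ∑ j, (J V i j x - J V j i x) ^ 2 := by
    apply Continuous.integrable_of_hasCompactSupport
    · exact (hφ.continuous.pow 2).mul (continuous_finset_sum _ fun i _ =>
        continuous_finset_sum _ fun j _ => ((cont_J hV i j).sub (cont_J hV j i)).pow 2)
    · exact HasCompactSupport.intro hsupp fun x hx => by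
        rw [image_eq_zero_of_notMem_tsupport hx]; simp
  have iA : MeasureTheory.Integrable
      fun x => φ x ^ 2 * ∑ i, ∑ j, J V i j x * J V j i x := by
    apply Continuous.integrable_of_hasCompactSupport
    · exact (hφ.continuous.pow 2).mul (continuous_finset_sum _ fun i _ =>
        continuous_finset_sum _ fun j _ => (cont_J hV i j).mul (cont_J hV j i))
    · exact HasCompactSupport.intro hsupp fun x hx => by
        rw [image_eq_zero_of_notMem_tsupport hx]; simp
  rw [MeasureTheory.integral_add (iC2.const_mul (1/2)) iA,
    MeasureTheory.integral_const_mul]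
  have hibp := ibp hV hψ hψs
  simp only at hibp
  rw [hibp]
  ring
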